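/- Let $A_1,\dots,A_d$ be self-adjoint contractions on a Hilbert space $H$. Then there exist a Hilbert space $K$, an isometry $V: H \to K$, and commuting self-adjoint operators $T_1,\dots,T_d$ on $K$ such that $A_j = V^*T_jV$ for all $j$, and $\sum_{j=1}^d \epsilon_j T_j \leq d\, I$ for every sign vector $\epsilon \in \{-1,1\}^d$. -/

import Mathlib

noncomputable section Aux
set_option linter.unusedSectionVars false
set_option maxHeartbeats 1000000
set_option synthInstance.maxHeartbeats 400000
variable (d : ℕ) {H : Type} [NormedAddCommGroup H] [InnerProductSpace ℂ H] [CompleteSpace H]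

instance : CompleteSpace (PiLp 2 (fun _ : Fin d => H)) :=
  inferInstance

def ee : (PiLp 2 (fun _ : Fin d => H)) ≃L[ℂ] ∀ _ : Fin d, H := PiLp.continuousLinearEquiv 2 ℂ _

def Vd : H →L[ℂ] PiLp 2 (fun _ : Fin d => H) :=
  (ee d).symm.toContinuousLinearMap ∘L
    (ContinuousLinearMap.pi fun _ => ((Real.sqrt d)⁻¹ : ℝ) • ContinuousLinearMap.id ℂ H)

def Td (A : Fin d → H →L[ℂ] H) (j : Fin d) :
    PiLp 2 (fun _ : Fin d => H) →L[ℂ] PiLp 2 (fun _ : Fin d => H) :=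
  (ee d).symm.toContinuousLinearMap ∘L
    (ContinuousLinearMap.pi fun i =>
      if i = j then ((d : ℝ) • A j) ∘L ContinuousLinearMap.proj j else 0) ∘L
    (ee d).toContinuousLinearMap

@[simp] lemma Vd_apply (h : H) (i : Fin d) : Vd d h i = ((Real.sqrt d)⁻¹ : ℝ) • h := rfl

@[simp] lemma Td_apply (A : Fin d → H →L[ℂ] H) (j : Fin d) (x : PiLp 2 (fun _ : Fin d => H))
    (i : Fin d) : Td d A j x i = if i = j then (d : ℝ) • A j (x j) else 0 := by
  by_cases h : i = j <;> simp [Td, ContinuousLinearMap.pi_apply, h, ee]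

lemma KK_ext {x y : PiLp 2 (fun _ : Fin d => H)} (h : ∀ i, x i = y i) : x = y := PiLp.ext h

lemma Td_comm (A : Fin d → H →L[ℂ] H) (i j : Fin d) :
    Commute (Td d A i) (Td d A j) := by
  by_cases hij : i = j
  · subst hij; exact Commute.refl _
  · refine ContinuousLinearMap.ext fun x => ?_
    refine KK_ext d fun k => ?_
    simp only [ContinuousLinearMap.coe_mul, Function.comp_apply, ContinuousLinearMap.mul_apply,
      Td_apply]
    by_cases hk : k = i <;> by_cases hk' : k = j <;>
      simp [hk, hk', hij, Ne.symm hij]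

lemma Td_symm (A : Fin d → H →L[ℂ] H) (hsa : ∀ j, IsSelfAdjoint (A j)) (j : Fin d) :
    IsSelfAdjoint (Td d A j) := by
  rw [ContinuousLinearMap.isSelfAdjoint_iff_isSymmetric]
  intro x y
  simp only [ContinuousLinearMap.coe_coe, PiLp.inner_apply, Td_apply]
  rw [Finset.sum_eq_single j, Finset.sum_eq_single j]
  · simp only [if_pos rfl, if_true, ← Complex.coe_smul]
    rw [inner_smul_left, inner_smul_right]
    have hsym := ((ContinuousLinearMap.isSelfAdjoint_iff_isSymmetric).1 (hsa j)) (x j) (y j)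
    simp only [ContinuousLinearMap.coe_coe] at hsym
    rw [Complex.conj_ofReal, hsym]
  · intro b _ hb; simp [hb]
  · simp
  · intro b _ hb; simp [hb]
  · simp

lemma Vd_isometry (hd : 0 < d) : Isometry (Vd d (H := H)) := by
  refine AddMonoidHomClass.isometry_of_norm _ fun h => ?_
  rw [PiLp.norm_eq_of_L2]
  have hs : (0:ℝ) < Real.sqrt d := Real.sqrt_pos.2 (by exact_mod_cast hd)
  have : ∀ i : Fin d, ‖Vd d h i‖ ^ 2 = ((Real.sqrt d)⁻¹ * ‖h‖) ^ 2 := by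
    intro i; rw [Vd_apply, norm_smul]; simp [abs_of_nonneg (Real.sqrt_nonneg (d:ℝ))]
  rw [Finset.sum_congr rfl fun i _ => this i, Finset.sum_const]
  simp only [Finset.card_univ, Fintype.card_fin, nsmul_eq_mul]
  rw [mul_pow, inv_pow, Real.sq_sqrt (by positivity : (0:ℝ) ≤ (d:ℝ))]
  rw [← mul_assoc, mul_inv_cancel₀ (by exact_mod_cast hd.ne'), one_mul]
  exact Real.sqrt_sq (norm_nonneg h)

lemma Vd_adjoint_Td (A : Fin d → H →L[ℂ] H) (hd : 0 < d) (j : Fin d) :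
    A j = (ContinuousLinearMap.adjoint (Vd d (H := H))) ∘L Td d A j ∘L Vd d := by
  have hdR : (0:ℝ) < d := by exact_mod_cast hd
  refine ContinuousLinearMap.ext fun x => ?_
  refine ext_inner_right ℂ fun y => ?_
  rw [ContinuousLinearMap.comp_apply, ContinuousLinearMap.comp_apply,
    ContinuousLinearMap.adjoint_inner_left]
  rw [PiLp.inner_apply]
  rw [Finset.sum_eq_single j]
  · simp only [Td_apply, if_pos rfl, if_true, Vd_apply, map_smul, ← Complex.coe_smul]
    rw [inner_smul_left, inner_smul_left, inner_smul_right]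
    simp only [Complex.conj_ofReal]
    rw [← mul_assoc, ← mul_assoc]
    have : ((d:ℝ) : ℂ) * ((Real.sqrt d)⁻¹ : ℝ) * ((Real.sqrt d)⁻¹ : ℝ) = 1 := by
      rw [← Complex.ofReal_mul, ← Complex.ofReal_mul]
      norm_cast
      rw [mul_assoc, ← mul_inv, Real.mul_self_sqrt hdR.le]
      field_simp
    rw [this, one_mul]
  · intro b _ hb; simp [Td_apply, hb]
  · simp

lemma inner_Td (A : Fin d → H →L[ℂ] H) (j : Fin d) (x : PiLp 2 (fun _ : Fin d => H)) :
    (inner ℂ (Td d A j x) x : ℂ) = (d:ℝ) * inner ℂ (A j (x j)) (x j) := by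
  rw [PiLp.inner_apply, Finset.sum_eq_single j]
  · simp only [Td_apply, if_pos rfl, if_true, ← Complex.coe_smul]
    rw [inner_smul_left, Complex.conj_ofReal]
  · intro b _ hb; simp [Td_apply, hb]
  · simp

lemma key_bound (B : H →L[ℂ] H) (hB : ‖B‖ ≤ 1) (e : ℝ) (he : e = 1 ∨ e = -1) (v : H) :
    e * Complex.re (inner ℂ (B v) v : ℂ) ≤ ‖v‖ ^ 2 := by
  have h1 : |Complex.re (inner ℂ (B v) v : ℂ)| ≤ ‖v‖ ^ 2 := by
    refine le_trans (Complex.abs_re_le_norm _) ?_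
    calc ‖(inner ℂ (B v) v)‖ = ‖(inner ℂ (B v) v)‖ := rfl
      _ ≤ ‖B v‖ * ‖v‖ := norm_inner_le_norm _ _
      _ ≤ (‖B‖ * ‖v‖) * ‖v‖ := by
          exact mul_le_mul_of_nonneg_right (B.le_opNorm v) (norm_nonneg v)
      _ ≤ (1 * ‖v‖) * ‖v‖ := by
          have := mul_le_mul_of_nonneg_right hB (norm_nonneg v)
          exact mul_le_mul_of_nonneg_right this (norm_nonneg v)
      _ = ‖v‖ ^ 2 := by ring
  have he' : |e| = 1 := by rcases he with h | h <;> simp [h]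
  calc e * Complex.re (inner ℂ (B v) v : ℂ) ≤ |e * Complex.re (inner ℂ (B v) v : ℂ)| := le_abs_self _
    _ = |e| * |Complex.re (inner ℂ (B v) v : ℂ)| := abs_mul _ _
    _ = |Complex.re (inner ℂ (B v) v : ℂ)| := by rw [he', one_mul]
    _ ≤ ‖v‖ ^ 2 := h1

lemma Td_pos (A : Fin d → H →L[ℂ] H) (hsa : ∀ j, IsSelfAdjoint (A j)) (hc : ∀ j, ‖A j‖ ≤ 1)
    (ε : Fin d → ℝ) (hε : ∀ j, ε j = 1 ∨ ε j = -1) :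
    ((d : ℝ) • (1 : PiLp 2 (fun _ : Fin d => H) →L[ℂ] PiLp 2 (fun _ : Fin d => H)) -
      ∑ j, ε j • Td d A j).IsPositive := by
  constructor
  · intro x y
    have hsym := fun j => (ContinuousLinearMap.isSelfAdjoint_iff_isSymmetric).1 (Td_symm d A hsa j)
    simp only [ContinuousLinearMap.coe_coe, ContinuousLinearMap.sub_apply,
      ContinuousLinearMap.smul_apply, ContinuousLinearMap.one_apply,
      ContinuousLinearMap.sum_apply, inner_sub_left, inner_sub_right, sum_inner, inner_sum]
    congr 1
    · rw [← Complex.coe_smul, ← Complex.coe_smul, inner_smul_left, inner_smul_right,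
        Complex.conj_ofReal]
    · refine Finset.sum_congr rfl fun j _ => ?_
      rw [← Complex.coe_smul, ← Complex.coe_smul, inner_smul_left, inner_smul_right,
        Complex.conj_ofReal]
      congr 1
      have := hsym j x y
      simpa using this
  · intro x
    rw [ContinuousLinearMap.reApplyInnerSelf]
    simp only [ContinuousLinearMap.sub_apply, ContinuousLinearMap.smul_apply,
      ContinuousLinearMap.one_apply, ContinuousLinearMap.sum_apply]
    rw [inner_sub_left, sum_inner]
    have hterm : ∀ j, (inner ℂ (ε j • Td d A j x) x : ℂ)
        = (ε j : ℂ) * ((d:ℝ) * inner ℂ (A j (x j)) (x j)) := by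
      intro j
      rw [← Complex.coe_smul, inner_smul_left, Complex.conj_ofReal, inner_Td]
    rw [Finset.sum_congr rfl fun j _ => hterm j]

    have hdx : (inner ℂ ((d:ℝ) • x) x : ℂ) = (d:ℝ) * inner ℂ x x := by
      rw [← Complex.coe_smul, inner_smul_left, Complex.conj_ofReal]
    rw [hdx]
    simp only [RCLike.re_to_complex]
    rw [Complex.sub_re]
    have hre1 : ((((d:ℝ)) : ℂ) * inner ℂ x x).re = (d:ℝ) * ∑ i, ‖x i‖ ^ 2 := by
      rw [Complex.re_ofReal_mul, PiLp.inner_apply]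
      congr 1
      rw [Complex.re_sum]
      exact Finset.sum_congr rfl fun i _ => inner_self_eq_norm_sq (𝕜 := ℂ) (x i)
    have hre2 : (∑ j, (ε j : ℂ) * ((d:ℝ) * inner ℂ (A j (x j)) (x j))).re
        = ∑ j, ε j * ((d:ℝ) * (inner ℂ (A j (x j)) (x j) : ℂ).re) := by
      rw [Complex.re_sum]
      refine Finset.sum_congr rfl fun j _ => ?_
      rw [Complex.re_ofReal_mul, Complex.re_ofReal_mul]
    rw [hre1, hre2, sub_nonneg, Finset.mul_sum]
    refine Finset.sum_le_sum fun i _ => ?_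
    calc ε i * ((d:ℝ) * (inner ℂ (A i (x i)) (x i) : ℂ).re)
        = (d:ℝ) * (ε i * (inner ℂ (A i (x i)) (x i) : ℂ).re) := by ring
      _ ≤ (d:ℝ) * ‖x i‖ ^ 2 := by
          refine mul_le_mul_of_nonneg_left ?_ (by positivity)
          exact key_bound (A i) (hc i) (ε i) (hε i) (x i)

end Aux

/-- Every `d`-tuple of self-adjoint contractions dilates to a commuting self-adjoint
tuple `T` satisfying `∑ εⱼ Tⱼ ≤ d·I` for all sign vectors `ε ∈ {-1,1}^d`. -/
theorem stmt_7 (d : ℕ) {H : Type} [NormedAddCommGroup H] [InnerProductSpace ℂ H]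
    [CompleteSpace H] (A : Fin d → H →L[ℂ] H)
    (hsa : ∀ j, IsSelfAdjoint (A j)) (hc : ∀ j, ‖A j‖ ≤ 1) :
    ∃ (K : Type) (_ : NormedAddCommGroup K) (_ : InnerProductSpace ℂ K)
      (_ : CompleteSpace K) (V : H →L[ℂ] K) (T : Fin d → K →L[ℂ] K),
      Isometry V ∧
      (∀ i j, Commute (T i) (T j)) ∧
      (∀ j, IsSelfAdjoint (T j)) ∧
      (∀ j, A j = (ContinuousLinearMap.adjoint V) ∘L (T j) ∘L V) ∧
      (∀ ε : Fin d → ℝ, (∀ j, ε j = 1 ∨ ε j = -1) →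
        ((d : ℝ) • (1 : K →L[ℂ] K) - ∑ j, ε j • T j).IsPositive) := by
  rcases Nat.eq_zero_or_pos d with hd | hd
  · subst hd
    refine ⟨H, inferInstance, inferInstance, inferInstance, ContinuousLinearMap.id ℂ H,
      fun j => j.elim0, ?_, fun i => i.elim0, fun j => j.elim0, fun j => j.elim0, ?_⟩
    · rw [ContinuousLinearMap.coe_id']; exact isometry_id
    · intro ε _
      have h0 : (((0:ℕ) : ℝ) • (1 : H →L[ℂ] H) -
          ∑ j : Fin 0, ε j • (fun j : Fin 0 => j.elim0 : Fin 0 → H →L[ℂ] H) j) = 0 := by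
        simp
      rw [h0]
      exact ContinuousLinearMap.isPositive_zero
  · exact ⟨PiLp 2 (fun _ : Fin d => H), inferInstance, inferInstance, inferInstance,
      Vd d, Td d A, Vd_isometry d hd, Td_comm d A, Td_symm d A hsa,
      Vd_adjoint_Td d A hd, Td_pos d A hsa hc⟩
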